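/- Let A be a type and let R be the multivariate polynomial ring over ℤ with variables X_{a,k} indexed by pairs (a, k) with a ∈ A and k a positive natural number. Let I be the ideal of R generated by the elements X_{a,k}·X_{a,l} − Σ_{i=0}^{l} binom(k+i, i)·binom(k, l−i)·X_{a,k+i}, taken over all a ∈ A and all 1 ≤ l ≤ k. Then for every a ∈ A and every k ≥ 1, the element k!·X_{a,k} − Π_{i=0}^{k−1}(X_{a,1} − i) belongs to I. (The ideal I' generated by these elements is contained in I.) -/

import Mathlib

open MvPolynomial

/-- The variable `X_{a,k}` of the polynomial ring `ℤ[X_{a,k} : a ∈ A, k ∈ ℕ⁺]`. -/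
noncomputable def Xv {A : Type*} (a : A) (k : ℕ+) : MvPolynomial (A × ℕ+) ℤ :=
  MvPolynomial.X (a, k)

/-- The positive natural `k + i`. -/
def padd (k : ℕ+) (i : ℕ) : ℕ+ :=
  ⟨(k : ℕ) + i, Nat.lt_of_lt_of_le k.pos (Nat.le_add_right _ _)⟩

/-- Generators of the ideal `I`: the elements
`X_{a,k}·X_{a,l} − Σ_{i=0}^{l} binom(k+i,i)·binom(k,l−i)·X_{a,k+i}` for `1 ≤ l ≤ k`. -/
def genI (A : Type*) : Set (MvPolynomial (A × ℕ+) ℤ) :=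
  {p | ∃ (a : A) (k l : ℕ+), l ≤ k ∧
    p = Xv a k * Xv a l - ∑ i ∈ Finset.range ((l : ℕ) + 1),
      (Nat.choose ((k : ℕ) + i) i * Nat.choose (k : ℕ) ((l : ℕ) - i)) • Xv a (padd k i)}

/-- Generators of the ideal `I'`: the elements
`k!·X_{a,k} − Π_{i=0}^{k−1}(X_{a,1} − i)` for `k ≥ 1`. -/
def genI' (A : Type*) : Set (MvPolynomial (A × ℕ+) ℤ) :=
  {p | ∃ (a : A) (k : ℕ+),
    p = Nat.factorial (k : ℕ) • Xv a k -
      ∏ i ∈ Finset.range (k : ℕ), (Xv a 1 - MvPolynomial.C (i : ℤ))}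

lemma padd_zero (k : ℕ+) : padd k 0 = k := rfl

lemma padd_one (k : ℕ+) : padd k 1 = k + 1 := rfl

lemma g2_mem {A : Type*} (a : A) (k : ℕ+) :
    Xv a k * Xv a 1 - ((k : ℕ) • Xv a k + ((k : ℕ) + 1) • Xv a (k + 1)) ∈
      Ideal.span (genI A) := by
  apply Ideal.subset_span
  refine ⟨a, k, 1, k.one_le, ?_⟩
  simp [Finset.sum_range_succ, padd_zero, padd_one]

/-- Every generator of `I'` belongs to `I`, i.e. `I' ⊆ I`. -/
theorem genI'_mem_spanI {A : Type*} (a : A) (k : ℕ+) :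
    Nat.factorial (k : ℕ) • Xv a k -
        ∏ i ∈ Finset.range (k : ℕ), (Xv a 1 - MvPolynomial.C (i : ℤ)) ∈
      Ideal.span (genI A) := by
  induction k using PNat.recOn with
  | one => simp
  | succ k ih =>
    have hc : ((k + 1 : ℕ+) : ℕ) = (k : ℕ) + 1 := rfl
    rw [hc, Finset.prod_range_succ]
    have key :
        Nat.factorial ((k : ℕ) + 1) • Xv a (k + 1) -
          (∏ i ∈ Finset.range (k : ℕ), (Xv a 1 - MvPolynomial.C (i : ℤ))) *
            (Xv a 1 - MvPolynomial.C ((k : ℕ) : ℤ)) =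
        (Xv a 1 - MvPolynomial.C ((k : ℕ) : ℤ)) *
          (Nat.factorial (k : ℕ) • Xv a k -
            ∏ i ∈ Finset.range (k : ℕ), (Xv a 1 - MvPolynomial.C (i : ℤ))) -
        MvPolynomial.C ((Nat.factorial (k : ℕ) : ℤ)) *
          (Xv a k * Xv a 1 - ((k : ℕ) • Xv a k + ((k : ℕ) + 1) • Xv a (k + 1))) := by
      simp only [nsmul_eq_mul, Nat.factorial_succ, MvPolynomial.C_eq_coe_nat]
      push_cast
      ring
    rw [key]
    exact Ideal.sub_mem _ (Ideal.mul_mem_left _ _ ih)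
      (Ideal.mul_mem_left _ _ (g2_mem a k))
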